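/- Let b, η, T > 0, let N ≥ 3 be an integer, and let X ⊂ [0,b] be measurable with λ₁(X ∩ W) ≤ ηb/(N(1+log N)) for every interval W of length b/N. Then for every x ∈ [0,b], |P(X, x + (Tbη/N)i)| ≤ (1/π)(3/T + 2η), where P(X,z) = (i/π)∫_X dt/(z−t). -/

import Mathlib

open Set MeasureTheory Complex

/-- The Poisson-type integral `P(X,z) = (i/π) ∫_X dt/(z-t)`. -/
noncomputable def P (X : Set ℝ) (z : ℂ) : ℂ :=
  (Complex.I / (Real.pi : ℂ)) * ∫ t in X, (z - (t : ℂ))⁻¹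

private lemma lintegral_biUnion_finset_le' {ι : Type*} (s : Finset ι) (t : ι → Set ℝ)
    (f : ℝ → ENNReal) :
    ∫⁻ a in ⋃ i ∈ s, t i, f a ≤ ∑ i ∈ s, ∫⁻ a in t i, f a := by
  classical
  induction s using Finset.induction_on with
  | empty => simp
  | @insert a s hi ih =>
    rw [Finset.set_biUnion_insert, Finset.sum_insert hi]
    exact (lintegral_union_le _ _ _).trans (add_le_add le_rfl ih)

private lemma icc_cover (c d : ℝ) (hd : 0 ≤ d) : ∀ n : ℕ,
    Set.Icc c (c + n * d) ⊆
      Set.Icc c c ∪ ⋃ j ∈ Finset.range n, Set.Icc (c + (j : ℝ) * d) (c + ((j : ℝ) + 1) * d) := by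
  intro n
  induction n with
  | zero => simp
  | succ n ih =>
    intro u hu
    obtain ⟨h1, h2⟩ := hu
    by_cases hc : u ≤ c + n * d
    · rcases ih ⟨h1, hc⟩ with h | h
      · exact Or.inl h
      · refine Or.inr ?_
        simp only [Set.mem_iUnion, Finset.mem_range] at h ⊢
        obtain ⟨j, hj, hju⟩ := h
        exact ⟨j, Nat.lt_succ_of_lt hj, hju⟩
    · refine Or.inr ?_
      simp only [Set.mem_iUnion, Finset.mem_range]
      refine ⟨n, Nat.lt_succ_self n, ⟨le_of_not_ge hc, ?_⟩⟩
      push_cast at h2 ⊢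
      linarith

set_option maxHeartbeats 1000000 in
/-- Lemma 7: if `b, η, T > 0`, `N ≥ 3` and `X ⊆ [0,b]` is measurable with
`λ₁(X ∩ W) ≤ ηb/(N(1 + log N))` for every interval `W` of length `b/N`, then
`|P(X, x + (Tbη/N)i)| ≤ (1/π)(3/T + 2η)` for all `x ∈ [0,b]`. -/
theorem P_small_on_horizontal_line (b η T : ℝ) (hb : 0 < b) (hη : 0 < η) (hT : 0 < T)
    (N : ℕ) (hN : 3 ≤ N) (X : Set ℝ) (hX : MeasurableSet X) (hXb : X ⊆ Set.Icc 0 b)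
    (hsmall : ∀ w : ℝ, volume (X ∩ Set.Icc w (w + b / N)) ≤
      ENNReal.ofReal (η * b / (N * (1 + Real.log N))))
    (x : ℝ) (hx : x ∈ Set.Icc (0 : ℝ) b) :
    ‖P X ((x : ℂ) + (T * b * η / N : ℝ) * Complex.I)‖ ≤
      (1 / Real.pi) * (3 / T + 2 * η) := by
  obtain ⟨hx0, hxb⟩ := hx
  have hN0 : (0 : ℝ) < N := by positivity
  have hN3 : (3 : ℝ) ≤ N := by exact_mod_cast hN
  have hL : 1 ≤ Real.log N := by
    rw [Real.le_log_iff_exp_le hN0]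
    calc Real.exp 1 ≤ 2.7182818286 := Real.exp_one_lt_d9.le
    _ ≤ (N : ℝ) := by linarith
  have hL2 : (2 : ℝ) ≤ 1 + Real.log N := by linarith
  set y : ℝ := T * b * η / N with hy_def
  have hy : 0 < y := by positivity
  set d : ℝ := b / N with hd_def
  have hd : 0 < d := by positivity
  set m : ℝ := η * b / (N * (1 + Real.log N)) with hm_def
  have hm : 0 < m := by positivity
  set z : ℂ := (x : ℂ) + (y : ℝ) * Complex.I with hz_def
  set G : ℝ → ENNReal := fun t => ENNReal.ofReal ‖(z - (t : ℂ))⁻¹‖ with hG_def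
  -- pointwise bounds
  have habs_y : ∀ t : ℝ, y ≤ ‖z - (t : ℂ)‖ := by
    intro t
    have him : (z - (t : ℂ)).im = y := by simp [hz_def]
    calc y = |(z - (t : ℂ)).im| := by rw [him, abs_of_pos hy]
    _ ≤ ‖z - (t : ℂ)‖ := Complex.abs_im_le_norm _
  have habs_re : ∀ t : ℝ, |x - t| ≤ ‖z - (t : ℂ)‖ := by
    intro t
    have hre : (z - (t : ℂ)).re = x - t := by simp [hz_def]
    calc |x - t| = |(z - (t : ℂ)).re| := by rw [hre]
    _ ≤ ‖z - (t : ℂ)‖ := Complex.abs_re_le_norm _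
  have hGbound : ∀ (r : ℝ) (t : ℝ), 0 < r → r ≤ ‖z - (t : ℂ)‖ →
      G t ≤ ENNReal.ofReal r⁻¹ := by
    intro r t hr hrt
    apply ENNReal.ofReal_le_ofReal
    rw [norm_inv]
    exact inv_anti₀ hr hrt
  -- the real-valued bound for each window, indexed by its distance index
  set bR : ℕ → ℝ := fun j => (if j = 0 then y else (j : ℝ) * d)⁻¹ * m with hbR_def
  have hbR_pos : ∀ j, 0 < bR j := by
    intro j
    rcases Nat.eq_zero_or_pos j with h | h
    · simp only [hbR_def, h, if_pos rfl]; positivity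
    · have : j ≠ 0 := h.ne'
      have hj : (0 : ℝ) < j := by exact_mod_cast h
      simp only [hbR_def, if_neg this]; positivity
  set B : ℕ → ENNReal := fun j => ENNReal.ofReal (bR j) with hB_def
  -- window estimate
  have hwindow : ∀ (lo : ℝ) (k : ℕ),
      (∀ t ∈ Set.Icc lo (lo + d), (if k = 0 then y else (k : ℝ) * d) ≤ ‖z - (t : ℂ)‖) →
      ∫⁻ t in X ∩ Set.Icc lo (lo + d), G t ≤ B k := by
    intro lo k hk
    set r : ℝ := if k = 0 then y else (k : ℝ) * d with hr_def
    have hr : 0 < r := by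
      rcases Nat.eq_zero_or_pos k with h | h
      · simp only [hr_def, h, if_pos rfl]; exact hy
      · have hne : k ≠ 0 := h.ne'
        have hk' : (0 : ℝ) < k := by exact_mod_cast h
        simp only [hr_def, if_neg hne]; positivity
    calc ∫⁻ t in X ∩ Set.Icc lo (lo + d), G t
        ≤ ∫⁻ _ in X ∩ Set.Icc lo (lo + d), ENNReal.ofReal r⁻¹ := by
          refine setLIntegral_mono measurable_const ?_
          intro t ht
          exact hGbound r t hr (hk t ht.2)
      _ = ENNReal.ofReal r⁻¹ * volume (X ∩ Set.Icc lo (lo + d)) := setLIntegral_const _ _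
      _ ≤ ENNReal.ofReal r⁻¹ * ENNReal.ofReal m := by
          exact mul_le_mul_right (hsmall lo) _
      _ = B k := by
          rw [hB_def, hbR_def, ← ENNReal.ofReal_mul (by positivity)]
  -- cover the right half
  have hNd : (N : ℝ) * d = b := by rw [hd_def]; field_simp
  have hcov_right : Set.Icc x (x + b) ⊆
      ⋃ j ∈ Finset.range N, Set.Icc (x + (j : ℝ) * d) (x + ((j : ℝ) + 1) * d) := by
    have h := icc_cover x d hd.le N
    rw [hNd] at h
    refine h.trans (Set.union_subset ?_ le_rfl)
    intro u hu
    simp only [Set.mem_Icc] at hu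
    have : u = x := le_antisymm hu.2 hu.1
    subst this
    simp only [Set.mem_iUnion, Finset.mem_range]
    exact ⟨0, by omega, by constructor <;> [simp; · push_cast; nlinarith]⟩
  have hcov_left : Set.Icc (x - b) x ⊆
      ⋃ j ∈ Finset.range N, Set.Icc ((x - b) + (j : ℝ) * d) ((x - b) + ((j : ℝ) + 1) * d) := by
    have h := icc_cover (x - b) d hd.le N
    rw [hNd] at h
    have hxx : x - b + b = x := by ring
    rw [hxx] at h
    refine h.trans (Set.union_subset ?_ le_rfl)
    intro u hu
    simp only [Set.mem_Icc] at hu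
    have : u = x - b := le_antisymm hu.2 hu.1
    subst this
    simp only [Set.mem_iUnion, Finset.mem_range]
    exact ⟨0, by omega, by constructor <;> [simp; · push_cast; nlinarith]⟩
  -- right-half estimate
  have hright : ∫⁻ t in X ∩ Set.Icc x (x + b), G t ≤ ∑ j ∈ Finset.range N, B j := by
    calc ∫⁻ t in X ∩ Set.Icc x (x + b), G t
        ≤ ∫⁻ t in ⋃ j ∈ Finset.range N,
            (X ∩ Set.Icc (x + (j : ℝ) * d) (x + ((j : ℝ) + 1) * d)), G t := by
          apply lintegral_mono_set
          intro t ht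
          have := hcov_right ht.2
          simp only [Set.mem_iUnion, Finset.mem_range] at this ⊢
          obtain ⟨j, hj, hjt⟩ := this
          exact ⟨j, hj, ht.1, hjt⟩
      _ ≤ ∑ j ∈ Finset.range N,
            ∫⁻ t in X ∩ Set.Icc (x + (j : ℝ) * d) (x + ((j : ℝ) + 1) * d), G t :=
          lintegral_biUnion_finset_le' _ _ _
      _ ≤ ∑ j ∈ Finset.range N, B j := by
          refine Finset.sum_le_sum ?_
          intro j _
          have heq : x + ((j : ℝ) + 1) * d = (x + (j : ℝ) * d) + d := by ring
          rw [heq]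
          refine hwindow _ j ?_
          intro t ht
          rcases Nat.eq_zero_or_pos j with h0 | h0
          · simpa [h0] using habs_y t
          · have hne : j ≠ 0 := h0.ne'
            rw [if_neg hne]
            refine le_trans ?_ (habs_re t)
            rw [abs_sub_comm]
            have : x + (j : ℝ) * d ≤ t := ht.1
            calc (j : ℝ) * d ≤ t - x := by linarith
            _ ≤ |t - x| := le_abs_self _
  -- left-half estimate
  have hleft : ∫⁻ t in X ∩ Set.Icc (x - b) x, G t ≤ ∑ j ∈ Finset.range N, B j := by
    calc ∫⁻ t in X ∩ Set.Icc (x - b) x, G t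
        ≤ ∫⁻ t in ⋃ j ∈ Finset.range N,
            (X ∩ Set.Icc ((x - b) + (j : ℝ) * d) ((x - b) + ((j : ℝ) + 1) * d)), G t := by
          apply lintegral_mono_set
          intro t ht
          have := hcov_left ht.2
          simp only [Set.mem_iUnion, Finset.mem_range] at this ⊢
          obtain ⟨j, hj, hjt⟩ := this
          exact ⟨j, hj, ht.1, hjt⟩
      _ ≤ ∑ j ∈ Finset.range N,
            ∫⁻ t in X ∩ Set.Icc ((x - b) + (j : ℝ) * d) ((x - b) + ((j : ℝ) + 1) * d), G t :=
          lintegral_biUnion_finset_le' _ _ _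
      _ ≤ ∑ j ∈ Finset.range N, B (N - 1 - j) := by
          refine Finset.sum_le_sum ?_
          intro j hj
          rw [Finset.mem_range] at hj
          have heq : (x - b) + ((j : ℝ) + 1) * d = ((x - b) + (j : ℝ) * d) + d := by ring
          rw [heq]
          refine hwindow _ (N - 1 - j) ?_
          intro t ht
          rcases Nat.eq_zero_or_pos (N - 1 - j) with h0 | h0
          · simpa [h0] using habs_y t
          · have hne : N - 1 - j ≠ 0 := h0.ne'
            rw [if_neg hne]
            refine le_trans ?_ (habs_re t)
            have hcast : ((N - 1 - j : ℕ) : ℝ) = (N : ℝ) - 1 - j := by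
              have : j + 1 ≤ N := hj
              push_cast [Nat.cast_sub (by omega : 1 + j ≤ N), Nat.sub_sub]
              ring
            have ht2 : t ≤ (x - b) + ((j : ℝ) + 1) * d := by
              have := ht.2
              linarith
            calc ((N - 1 - j : ℕ) : ℝ) * d = ((N : ℝ) - 1 - j) * d := by rw [hcast]
            _ ≤ x - t := by nlinarith [hNd]
            _ ≤ |x - t| := le_abs_self _
      _ = ∑ j ∈ Finset.range N, B j := Finset.sum_range_reflect _ _
  -- total lintegral estimate
  set S : ℝ := ∑ j ∈ Finset.range N, bR j with hS_def
  have hBsum : ∑ j ∈ Finset.range N, B j = ENNReal.ofReal S := by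
    rw [hS_def, ENNReal.ofReal_sum_of_nonneg (fun j _ => (hbR_pos j).le)]
  have htotal : ∫⁻ t in X, G t ≤ ENNReal.ofReal (2 * S) := by
    have hXsub : X ⊆ (X ∩ Set.Icc (x - b) x) ∪ (X ∩ Set.Icc x (x + b)) := by
      intro t ht
      obtain ⟨ht0, htb⟩ := hXb ht
      by_cases h : t ≤ x
      · exact Or.inl ⟨ht, by constructor <;> linarith⟩
      · exact Or.inr ⟨ht, by constructor <;> linarith⟩
    calc ∫⁻ t in X, G t
        ≤ ∫⁻ t in (X ∩ Set.Icc (x - b) x) ∪ (X ∩ Set.Icc x (x + b)), G t :=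
          lintegral_mono_set hXsub
      _ ≤ (∫⁻ t in X ∩ Set.Icc (x - b) x, G t) + ∫⁻ t in X ∩ Set.Icc x (x + b), G t :=
          lintegral_union_le _ _ _
      _ ≤ ENNReal.ofReal S + ENNReal.ofReal S := by
          rw [← hBsum]; exact add_le_add hleft hright
      _ = ENNReal.ofReal (2 * S) := by
          rw [← ENNReal.ofReal_add (Finset.sum_nonneg fun j _ => (hbR_pos j).le)
            (Finset.sum_nonneg fun j _ => (hbR_pos j).le), two_mul]
  -- the sum S
  have hS_le : S ≤ 1 / (2 * T) + η := by
    have hNsucc : N = (N - 1) + 1 := by omega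
    have hsum : S = bR 0 + ∑ j ∈ Finset.range (N - 1), bR (j + 1) := by
      rw [hS_def, hNsucc, Finset.sum_range_succ' bR (N - 1), Nat.add_sub_cancel, add_comm]
    have hb0 : bR 0 = m / y := by
      have : bR 0 = y⁻¹ * m := by simp [hbR_def]
      rw [this, inv_mul_eq_div]
    have hmy : m / y = 1 / (T * (1 + Real.log N)) := by
      rw [hm_def, hy_def]
      have h1 : (1 : ℝ) + Real.log N ≠ 0 := by linarith
      field_simp
    have hmd : m / d = η / (1 + Real.log N) := by
      have h1 : (1 : ℝ) + Real.log N ≠ 0 := by linarith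
      rw [div_eq_div_iff (ne_of_gt hd) h1, hm_def, hd_def]
      field_simp
    have hrest : ∑ j ∈ Finset.range (N - 1), bR (j + 1)
        = (m / d) * ∑ j ∈ Finset.range (N - 1), ((j : ℝ) + 1)⁻¹ := by
      rw [Finset.mul_sum]
      refine Finset.sum_congr rfl ?_
      intro j _
      have : (j + 1 : ℕ) ≠ 0 := Nat.succ_ne_zero j
      rw [hbR_def]
      simp only [this, if_neg]
      push_cast
      rw [mul_inv, div_eq_mul_inv]
      ring
    have hharm : ∑ j ∈ Finset.range (N - 1), ((j : ℝ) + 1)⁻¹ ≤ 1 + Real.log N := by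
      have h1 : ∑ j ∈ Finset.range (N - 1), ((j : ℝ) + 1)⁻¹ = (harmonic (N - 1) : ℝ) := by
        rw [harmonic]
        push_cast
        rfl
      rw [h1]
      refine (harmonic_le_one_add_log (N - 1)).trans ?_
      have : Real.log ((N - 1 : ℕ) : ℝ) ≤ Real.log N := by
        apply Real.log_le_log (by exact_mod_cast (by omega : 0 < N - 1))
        exact_mod_cast Nat.sub_le N 1
      linarith
    have hη1 : 0 ≤ η / (1 + Real.log N) := by positivity
    calc S = m / y + (m / d) * ∑ j ∈ Finset.range (N - 1), ((j : ℝ) + 1)⁻¹ := by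
          rw [hsum, hb0, hrest]
      _ ≤ 1 / (T * (1 + Real.log N)) + (η / (1 + Real.log N)) * (1 + Real.log N) := by
          rw [hmy, hmd]
          exact add_le_add le_rfl (mul_le_mul_of_nonneg_left hharm hη1)
      _ ≤ 1 / (2 * T) + η := by
          have h1 : (η / (1 + Real.log N)) * (1 + Real.log N) = η := by
            field_simp
          rw [h1]
          have h2 : 1 / (T * (1 + Real.log N)) ≤ 1 / (2 * T) := by
            apply one_div_le_one_div_of_le (by positivity)
            nlinarith
          linarith
  -- conclude
  have hint : ‖∫ t in X, (z - (t : ℂ))⁻¹‖ ≤ 2 * S := by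
    refine le_trans (norm_integral_le_lintegral_norm _) ?_
    exact ENNReal.toReal_le_of_le_ofReal
      (by nlinarith [Finset.sum_nonneg (fun j (_ : j ∈ Finset.range N) => (hbR_pos j).le)])
      htotal
  have hPabs : ‖P X z‖ = (1 / Real.pi) * ‖∫ t in X, (z - (t : ℂ))⁻¹‖ := by
    rw [P, norm_mul, norm_div, Complex.norm_I, Complex.norm_real, Real.norm_eq_abs,
      abs_of_pos Real.pi_pos]
  have hfinal : 2 * S ≤ 3 / T + 2 * η := by
    have h12 : 1 / (2 * T) = (1 / 2) * (1 / T) := by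
      rw [one_div_mul_eq_div]
      ring
    have h3 : 3 / T = 3 * (1 / T) := by ring
    have hTpos : (0 : ℝ) < 1 / T := by positivity
    rw [h3]
    rw [h12] at hS_le
    linarith
  calc ‖P X z‖ = (1 / Real.pi) * ‖∫ t in X, (z - (t : ℂ))⁻¹‖ := hPabs
    _ ≤ (1 / Real.pi) * (2 * S) := by
        apply mul_le_mul_of_nonneg_left hint (by positivity)
    _ ≤ (1 / Real.pi) * (3 / T + 2 * η) := by
        apply mul_le_mul_of_nonneg_left hfinal (by positivity)
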